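/- arXiv:2003.06165 — 2 statements merged into one kernel-verified Lean document; each statement's English description precedes it below -/
import Mathlib

section
/- Let p be prime, H ≤ F_p^* a multiplicative subgroup, a ∈ F_p^*, N an interval of N consecutive integers, and m ≥ 2 an integer. Then S^m ≤ (N^{m-1}/|H|) · ∑_{λ=0}^{p-1} R(λ) |∑_{u∈H} e_p(aλu)|^m, where S = ∑_{n∈N} |∑_{h∈H} e_p(anh)| and R(λ) is the number of (n,h) ∈ N × H with nh ≡ λ (mod p). -/
open scoped Classical

/-- `ep p z = exp(2πi z/p)`, where `z ∈ F_p` is lifted to `{0,...,p-1}`. -/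
noncomputable def ep (p : ℕ) (z : ZMod p) : ℂ :=
  Complex.exp (2 * Real.pi * Complex.I * z.val / p)

theorem stmt_4 (p : ℕ) [Fact p.Prime] (H : Subgroup (ZMod p)ˣ) (a : (ZMod p)ˣ)
    (L : ℤ) (N : ℕ) (m : ℕ) (hm : 2 ≤ m)
    (R : ZMod p → ℕ)
    (hR : ∀ lam : ZMod p,
      R lam = Nat.card {q : ℤ × H //
        q.1 ∈ Finset.Icc (L + 1) (L + N) ∧
          (q.1 : ZMod p) * ((q.2 : (ZMod p)ˣ) : ZMod p) = lam}) :
    (∑ n ∈ Finset.Icc (L + 1) (L + N),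
        ‖∑ h : H, ep p ((a : ZMod p) * (n : ZMod p) * ((h : (ZMod p)ˣ) : ZMod p))‖) ^ m
      ≤ (N : ℝ) ^ (m - 1) / (Nat.card H : ℝ) *
          ∑ lam : ZMod p, (R lam : ℝ) *
            ‖∑ u : H, ep p ((a : ZMod p) * lam * ((u : (ZMod p)ˣ) : ZMod p))‖ ^ m := by
  set f : ZMod p → ℝ := fun lam =>
    ‖∑ u : H, ep p ((a : ZMod p) * lam * ((u : (ZMod p)ˣ) : ZMod p))‖ with hf
  have hf0 : ∀ lam, 0 ≤ f lam := fun lam => norm_nonneg _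
  -- invariance of f under multiplication by elements of H
  have hinv : ∀ (lam : ZMod p) (h : H), f (lam * ((h : (ZMod p)ˣ) : ZMod p)) = f lam := by
    intro lam h
    simp only [hf]
    congr 1
    rw [← Equiv.sum_comp (Equiv.mulLeft h)
      (fun u : H => ep p ((a : ZMod p) * lam * ((u : (ZMod p)ˣ) : ZMod p)))]
    apply Finset.sum_congr rfl
    intro u _
    congr 1
    simp only [Equiv.coe_mulLeft]
    push_cast
    ring
  set T : Finset (ℤ × H) := (Finset.Icc (L + 1) (L + N)) ×ˢ Finset.univ with hT
  set key : ℤ × H → ZMod p := fun q => (q.1 : ZMod p) * ((q.2 : (ZMod p)ˣ) : ZMod p) with hkey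
  -- R lam as a finset card
  have hRcard : ∀ lam, R lam = (T.filter (fun q => key q = lam)).card := by
    intro lam
    rw [hR lam, ← Nat.card_eq_finsetCard]
    apply Nat.card_congr
    apply Equiv.subtypeEquivRight
    intro q
    simp [hT, hkey, Finset.mem_filter, Finset.mem_product]
  -- fiberwise summation
  have hfiber : ∀ g : ZMod p → ℝ,
      ∑ lam : ZMod p, (R lam : ℝ) * g lam = ∑ q ∈ T, g (key q) := by
    intro g
    rw [← Finset.sum_fiberwise' T key g]
    apply Finset.sum_congr rfl
    intro lam _
    rw [Finset.sum_const, hRcard lam, nsmul_eq_mul]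
  -- the sum over T of f ∘ key equals |H| times S
  have hcardH : (Nat.card H : ℝ) = (Finset.univ : Finset H).card := by
    rw [Nat.card_eq_fintype_card, Fintype.card]
  have hS : ∑ q ∈ T, f (key q) =
      (Nat.card H : ℝ) * ∑ n ∈ Finset.Icc (L + 1) (L + N), f ((n : ℤ) : ZMod p) := by
    rw [hT, Finset.sum_product, Finset.mul_sum]
    apply Finset.sum_congr rfl
    intro n _
    have : ∀ h : H, f (key (n, h)) = f ((n : ℤ) : ZMod p) := by
      intro h
      exact hinv ((n : ℤ) : ZMod p) h
    simp only [this, Finset.sum_const, nsmul_eq_mul, hcardH]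
  have hTcard : (T.card : ℝ) = (N : ℝ) * (Nat.card H : ℝ) := by
    rw [hT, Finset.card_product, Int.card_Icc, hcardH]
    push_cast
    have : L + (N : ℤ) + 1 - (L + 1) = (N : ℤ) := by ring
    rw [this, Int.toNat_natCast]
  -- Jensen
  have hJ : (∑ q ∈ T, f (key q)) ^ m ≤ (T.card : ℝ) ^ (m - 1) * ∑ q ∈ T, f (key q) ^ m := by
    have := pow_sum_le_card_mul_sum_pow (s := T) (f := fun q => f (key q))
      (fun q _ => hf0 _) (m - 1)
    have hm1 : m - 1 + 1 = m := Nat.sub_add_cancel (by omega)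
    rwa [hm1] at this
  have hHpos : (0 : ℝ) < (Nat.card H : ℝ) := by
    have : 0 < Nat.card H := Nat.card_pos
    exact_mod_cast this
  -- put it together
  have hSfin : ∑ n ∈ Finset.Icc (L + 1) (L + N), f ((n : ℤ) : ZMod p)
      = (∑ q ∈ T, f (key q)) / (Nat.card H : ℝ) := by
    rw [hS]
    field_simp
  calc (∑ n ∈ Finset.Icc (L + 1) (L + N), f ((n : ℤ) : ZMod p)) ^ m
      = (∑ q ∈ T, f (key q)) ^ m / (Nat.card H : ℝ) ^ m := by
        rw [hSfin, div_pow]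
    _ ≤ ((T.card : ℝ) ^ (m - 1) * ∑ q ∈ T, f (key q) ^ m) / (Nat.card H : ℝ) ^ m := by
        apply div_le_div_of_nonneg_right hJ (by positivity) |>.trans_eq rfl
    _ = (N : ℝ) ^ (m - 1) / (Nat.card H : ℝ) * ∑ q ∈ T, f (key q) ^ m := by
        rw [hTcard, mul_pow]
        have hm1 : m = (m - 1) + 1 := (Nat.sub_add_cancel (by omega)).symm
        rw [hm1, pow_succ]
        field_simp
        ring_nf
        simp
    _ = (N : ℝ) ^ (m - 1) / (Nat.card H : ℝ) *
          ∑ lam : ZMod p, (R lam : ℝ) * f lam ^ m := by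
        rw [hfiber (fun lam => f lam ^ m)]
end

section
/- Let p be prime, H ≤ F_p^* a multiplicative subgroup, a ∈ F_p^*, N an interval of N consecutive integers, and m ≥ 2. Then S^{2m} ≤ (N^{2m-2}/|H|^2) · J(N,H) · p · T_m(H), where S = ∑_{n∈N} |∑_{h∈H} e_p(anh)|, J(N,H) is the number of solutions of n1 h1 ≡ n2 h2 (mod p) with n_i ∈ N, h_i ∈ H, and T_m(H) is the number of solutions of h_1+...+h_m ≡ h_{m+1}+...+h_{2m} (mod p) with all h_i ∈ H. -/
open scoped Classical

lemma ep_eq_stdAddChar {p : ℕ} [NeZero p] (z : ZMod p) : ep p z = ZMod.stdAddChar z := by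
  rw [ZMod.stdAddChar_apply, ZMod.toCircle_apply, ep]

lemma ep_add {p : ℕ} [NeZero p] (x y : ZMod p) : ep p (x + y) = ep p x * ep p y := by
  simp only [ep_eq_stdAddChar, AddChar.map_add_eq_mul]

lemma ep_zero {p : ℕ} [NeZero p] : ep p 0 = 1 := by
  simp only [ep_eq_stdAddChar, AddChar.map_zero_eq_one]

lemma ep_sum {p : ℕ} [NeZero p] {ι : Type*} (s : Finset ι) (c : ι → ZMod p) :
    ep p (∑ i ∈ s, c i) = ∏ i ∈ s, ep p (c i) := by
  induction s using Finset.cons_induction with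
  | empty => simp [ep_zero]
  | cons a s ha ih => rw [Finset.sum_cons, Finset.prod_cons, ep_add, ih]

lemma ep_ne_zero {p : ℕ} (z : ZMod p) : ep p z ≠ 0 := Complex.exp_ne_zero _

lemma conj_ep {p : ℕ} [NeZero p] (z : ZMod p) :
    (starRingEnd ℂ) (ep p z) = ep p (-z) := by
  have h1 : ep p (-z) * ep p z = 1 := by rw [← ep_add, neg_add_cancel, ep_zero]
  have h2 : (starRingEnd ℂ) (ep p z) * ep p z = 1 := by
    rw [ep, ← Complex.exp_conj]
    rw [← Complex.exp_add]
    have : (starRingEnd ℂ) (2 * Real.pi * Complex.I * z.val / p) =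
        -(2 * Real.pi * Complex.I * z.val / p) := by
      simp only [map_div₀, map_mul, map_ofNat, Complex.conj_I, Complex.conj_natCast,
        Complex.conj_ofReal]
      ring
    rw [this, neg_add_cancel, Complex.exp_zero]
  exact mul_right_cancel₀ (ep_ne_zero z) (h2.trans h1.symm)

lemma sum_ep_mul {p : ℕ} [Fact p.Prime] (b : ZMod p) :
    ∑ x : ZMod p, ep p (x * b) = if b = 0 then (p : ℂ) else 0 := by
  simp only [ep_eq_stdAddChar]
  rw [AddChar.sum_mulShift b (ZMod.isPrimitive_stdAddChar p)]
  simp [ZMod.card p]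

lemma hoelder_step {ι : Type*} (s : Finset ι) (x y : ι → ℝ)
    (hx : ∀ i ∈ s, 0 ≤ x i) (hy : ∀ i ∈ s, 0 ≤ y i) (m : ℕ) (hm : 2 ≤ m) :
    (∑ i ∈ s, x i * y i) ^ (2 * m)
      ≤ (∑ i ∈ s, x i) ^ (2 * m - 2) * (∑ i ∈ s, x i ^ 2) * (∑ i ∈ s, y i ^ (2 * m)) := by
  set A := ∑ i ∈ s, x i with hA
  have hA0 : 0 ≤ A := Finset.sum_nonneg hx
  rcases eq_or_lt_of_le hA0 with h0 | hpos
  · have hxz : ∀ i ∈ s, x i = 0 := by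
      intro i hi
      exact (Finset.sum_eq_zero_iff_of_nonneg hx).1 h0.symm i hi
    have hL : ∑ i ∈ s, x i * y i = 0 :=
      Finset.sum_eq_zero fun i hi => by rw [hxz i hi, zero_mul]
    rw [hL]
    rw [zero_pow (by positivity)]
    have : (0:ℝ) ^ (2 * m - 2) = 0 := zero_pow (by omega)
    rw [← h0, this]
    have h2 : 0 ≤ ∑ i ∈ s, x i ^ 2 := Finset.sum_nonneg fun i hi => sq_nonneg _
    have h3 : 0 ≤ ∑ i ∈ s, y i ^ (2 * m) :=
      Finset.sum_nonneg fun i hi => pow_nonneg (hy i hi) _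
    nlinarith
  · have h1 : (∑ i ∈ s, x i * y i) ^ m ≤ A ^ (m - 1) * ∑ i ∈ s, x i * y i ^ m := by
      have jensen := Real.pow_arith_mean_le_arith_mean_pow s (fun i => x i / A) y
        (fun i hi => div_nonneg (hx i hi) hA0) ?_ hy m
      · have hL : ∑ i ∈ s, x i / A * y i = (∑ i ∈ s, x i * y i) / A := by
          rw [Finset.sum_div]
          exact Finset.sum_congr rfl fun i _ => by ring
        have hR : ∑ i ∈ s, x i / A * y i ^ m = (∑ i ∈ s, x i * y i ^ m) / A := by
          rw [Finset.sum_div]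
          exact Finset.sum_congr rfl fun i _ => by ring
        rw [hL, hR, div_pow] at jensen
        have := (div_le_div_iff₀ (by positivity) hpos).1 jensen
        calc (∑ i ∈ s, x i * y i) ^ m = (∑ i ∈ s, x i * y i) ^ m * A / A := by
              field_simp
          _ ≤ (∑ i ∈ s, x i * y i ^ m) * A ^ m / A := by
              exact (div_le_div_iff_of_pos_right hpos).2 (by linarith)
          _ = A ^ (m - 1) * ∑ i ∈ s, x i * y i ^ m := by
              rw [div_eq_iff (ne_of_gt hpos), mul_comm (A ^ (m-1)) _, mul_assoc, ← pow_succ]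
              congr 2
              omega
      · rw [← Finset.sum_div, ← hA, div_self (ne_of_gt hpos)]
    have h2 : (∑ i ∈ s, x i * y i ^ m) ^ 2
        ≤ (∑ i ∈ s, x i ^ 2) * ∑ i ∈ s, y i ^ (2 * m) := by
      have := Finset.sum_mul_sq_le_sq_mul_sq s x (fun i => y i ^ m)
      calc (∑ i ∈ s, x i * y i ^ m) ^ 2 ≤ (∑ i ∈ s, x i ^ 2) * ∑ i ∈ s, (y i ^ m) ^ 2 := this
        _ = (∑ i ∈ s, x i ^ 2) * ∑ i ∈ s, y i ^ (2 * m) := by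
            congr 1
            exact Finset.sum_congr rfl fun i _ => by rw [← pow_mul, mul_comm m 2]
    have hL0 : 0 ≤ ∑ i ∈ s, x i * y i :=
      Finset.sum_nonneg fun i hi => mul_nonneg (hx i hi) (hy i hi)
    calc (∑ i ∈ s, x i * y i) ^ (2 * m) = ((∑ i ∈ s, x i * y i) ^ m) ^ 2 := by
          rw [← pow_mul, mul_comm m 2]
      _ ≤ (A ^ (m - 1) * ∑ i ∈ s, x i * y i ^ m) ^ 2 := by
          apply pow_le_pow_left₀ (pow_nonneg hL0 m) h1 2
      _ = A ^ (2 * m - 2) * (∑ i ∈ s, x i * y i ^ m) ^ 2 := by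
          rw [mul_pow, ← pow_mul]
          congr 2
          omega
      _ ≤ A ^ (2 * m - 2) * ((∑ i ∈ s, x i ^ 2) * ∑ i ∈ s, y i ^ (2 * m)) := by
          apply mul_le_mul_of_nonneg_left h2 (pow_nonneg hA0 _)
      _ = A ^ (2 * m - 2) * (∑ i ∈ s, x i ^ 2) * ∑ i ∈ s, y i ^ (2 * m) := by ring

/-- number of `2m`-tuples in `H^{2m}` with `h₁+⋯+h_m ≡ h_{m+1}+⋯+h_{2m} (mod p)`. -/
noncomputable def T (p m : ℕ) (H : Subgroup (ZMod p)ˣ) : ℕ :=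
  Nat.card {t : (Fin m → H) × (Fin m → H) //
    (∑ i, ((t.1 i : (ZMod p)ˣ) : ZMod p)) = ∑ i, ((t.2 i : (ZMod p)ˣ) : ZMod p)}

/-- number of quadruples `(n₁,n₂,h₁,h₂) ∈ 𝒩² × H²` with `n₁h₁ ≡ n₂h₂ (mod p)`,
where `𝒩 = {L+1,...,L+N}`. -/
noncomputable def J (p : ℕ) (L : ℤ) (N : ℕ) (H : Subgroup (ZMod p)ˣ) : ℕ :=
  Nat.card {q : (ℤ × ℤ) × H × H //
    q.1.1 ∈ Finset.Icc (L + 1) (L + N) ∧ q.1.2 ∈ Finset.Icc (L + 1) (L + N) ∧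
      (q.1.1 : ZMod p) * ((q.2.1 : (ZMod p)ˣ) : ZMod p)
        = (q.1.2 : ZMod p) * ((q.2.2 : (ZMod p)ˣ) : ZMod p)}

section moment
variable {p : ℕ} [Fact p.Prime] (H : Subgroup (ZMod p)ˣ) (a : (ZMod p)ˣ) (m : ℕ)

noncomputable def sig (H : Subgroup (ZMod p)ˣ) (m : ℕ) (t : Fin m → H) : ZMod p :=
  ∑ i, ((t i : (ZMod p)ˣ) : ZMod p)

lemma T_eq_card_filter :
    T p m H = (Finset.univ.filter
      (fun q : (Fin m → H) × (Fin m → H) => sig H m q.1 = sig H m q.2)).card := by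
  rw [T, Nat.card_eq_fintype_card]
  rw [Fintype.card_subtype]
  congr 1

noncomputable def g {p : ℕ} [NeZero p] (H : Subgroup (ZMod p)ˣ) (a : (ZMod p)ˣ)
    (μ : ZMod p) : ℂ :=
  ∑ h : H, ep p ((a : ZMod p) * μ * ((h : (ZMod p)ˣ) : ZMod p))

lemma g_pow (μ : ZMod p) :
    g H a μ ^ m = ∑ t : Fin m → H, ep p ((a : ZMod p) * μ * sig H m t) := by
  have h1 : g H a μ ^ m = ∏ _i : Fin m, g H a μ := by
    rw [Finset.prod_const, Finset.card_univ, Fintype.card_fin]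
  rw [h1]
  unfold g
  rw [Finset.prod_univ_sum, Fintype.piFinset_univ]
  refine Finset.sum_congr rfl fun t _ => ?_
  rw [← ep_sum, sig, Finset.mul_sum]

lemma conj_g_pow (μ : ZMod p) :
    ((starRingEnd ℂ) (g H a μ)) ^ m
      = ∑ t : Fin m → H, ep p (-((a : ZMod p) * μ * sig H m t)) := by
  have hc : (starRingEnd ℂ) (g H a μ)
      = ∑ h : H, ep p (-((a : ZMod p) * μ * ((h : (ZMod p)ˣ) : ZMod p))) := by
    rw [g, map_sum]
    exact Finset.sum_congr rfl fun h _ => conj_ep _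
  rw [hc]
  have h1 : (∑ h : H, ep p (-((a : ZMod p) * μ * ((h : (ZMod p)ˣ) : ZMod p)))) ^ m
      = ∏ _i : Fin m, ∑ h : H, ep p (-((a : ZMod p) * μ * ((h : (ZMod p)ˣ) : ZMod p))) := by
    rw [Finset.prod_const, Finset.card_univ, Fintype.card_fin]
  rw [h1, Finset.prod_univ_sum, Fintype.piFinset_univ]
  refine Finset.sum_congr rfl fun t _ => ?_
  rw [← ep_sum]
  congr 1
  rw [sig, Finset.mul_sum, Finset.sum_neg_distrib]

lemma moment_complex :
    ∑ μ : ZMod p, (g H a μ) ^ m * ((starRingEnd ℂ) (g H a μ)) ^ m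
      = (p : ℂ) * (T p m H : ℂ) := by
  have expand : ∀ μ : ZMod p, (g H a μ) ^ m * ((starRingEnd ℂ) (g H a μ)) ^ m
      = ∑ q : (Fin m → H) × (Fin m → H),
          ep p (μ * ((a : ZMod p) * (sig H m q.1 - sig H m q.2))) := by
    intro μ
    rw [g_pow, conj_g_pow, Finset.sum_mul_sum, Fintype.sum_prod_type]
    refine Finset.sum_congr rfl fun t _ => Finset.sum_congr rfl fun t' _ => ?_
    rw [← ep_add]
    congr 1
    ring
  calc ∑ μ : ZMod p, (g H a μ) ^ m * ((starRingEnd ℂ) (g H a μ)) ^ m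
      = ∑ μ : ZMod p, ∑ q : (Fin m → H) × (Fin m → H),
          ep p (μ * ((a : ZMod p) * (sig H m q.1 - sig H m q.2))) :=
        Finset.sum_congr rfl fun μ _ => expand μ
    _ = ∑ q : (Fin m → H) × (Fin m → H), ∑ μ : ZMod p,
          ep p (μ * ((a : ZMod p) * (sig H m q.1 - sig H m q.2))) := Finset.sum_comm
    _ = ∑ q : (Fin m → H) × (Fin m → H),
          if sig H m q.1 = sig H m q.2 then (p : ℂ) else 0 := by
        refine Finset.sum_congr rfl fun q _ => ?_
        rw [sum_ep_mul]
        refine if_congr ?_ rfl rfl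
        rw [mul_eq_zero, sub_eq_zero]
        have : ((a : ZMod p) : ZMod p) ≠ 0 := a.ne_zero
        constructor
        · rintro (h | h)
          · exact absurd h this
          · exact h
        · exact fun h => Or.inr h
    _ = (p : ℂ) * (T p m H : ℂ) := by
        rw [Finset.sum_ite, Finset.sum_const, Finset.sum_const_zero, add_zero,
          nsmul_eq_mul, T_eq_card_filter, mul_comm]

lemma moment_real :
    ∑ μ : ZMod p, ‖g H a μ‖ ^ (2 * m) = (p : ℝ) * (T p m H : ℝ) := by
  have key : ∀ z : ℂ, ((‖z‖ ^ (2 * m) : ℝ) : ℂ)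
      = z ^ m * ((starRingEnd ℂ) z) ^ m := by
    intro z
    calc ((‖z‖ ^ (2 * m) : ℝ) : ℂ)
        = (((Complex.normSq z ^ m : ℝ)) : ℂ) := by rw [pow_mul, Complex.sq_norm]
      _ = (z * (starRingEnd ℂ) z) ^ m := by rw [Complex.ofReal_pow, Complex.mul_conj]
      _ = z ^ m * ((starRingEnd ℂ) z) ^ m := mul_pow _ _ _
  have : ((∑ μ : ZMod p, ‖g H a μ‖ ^ (2 * m) : ℝ) : ℂ)
      = (((p : ℝ) * (T p m H : ℝ) : ℝ) : ℂ) := by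
    rw [Complex.ofReal_sum]
    have h1 : ∀ μ ∈ (Finset.univ : Finset (ZMod p)),
        ((‖g H a μ‖ ^ (2 * m) : ℝ) : ℂ)
          = (g H a μ) ^ m * ((starRingEnd ℂ) (g H a μ)) ^ m := fun μ _ => key _
    rw [Finset.sum_congr rfl h1, moment_complex]
    push_cast
    ring
  exact_mod_cast this

end moment

section main
variable {p : ℕ} [Fact p.Prime] (H : Subgroup (ZMod p)ˣ) (a : (ZMod p)ˣ) (L : ℤ) (N : ℕ)

noncomputable def sN : Finset (ℤ × H) := Finset.Icc (L + 1) (L + N) ×ˢ Finset.univ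

noncomputable def phi (H : Subgroup (ZMod p)ˣ) (q : ℤ × H) : ZMod p :=
  (q.1 : ZMod p) * ((q.2 : (ZMod p)ˣ) : ZMod p)

noncomputable def Rc (μ : ZMod p) : ℕ := ((sN H L N).filter (fun q => phi H q = μ)).card

lemma g_invariant (x : ZMod p) (h : H) :
    g H a (x * ((h : (ZMod p)ˣ) : ZMod p)) = g H a x := by
  unfold g
  refine Fintype.sum_equiv (Equiv.mulLeft h)
    (fun h' : H => ep p ((a : ZMod p) * (x * ((h : (ZMod p)ˣ) : ZMod p))
      * ((h' : (ZMod p)ˣ) : ZMod p)))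
    (fun h' : H => ep p ((a : ZMod p) * x * ((h' : (ZMod p)ˣ) : ZMod p))) fun h' => ?_
  simp only [Equiv.coe_mulLeft]
  congr 1
  push_cast
  ring

lemma sum_R : ∑ μ : ZMod p, Rc H L N μ = N * Fintype.card H := by
  have h1 := Finset.card_eq_sum_card_fiberwise
    (f := phi H) (s := sN H L N) (t := (Finset.univ : Finset (ZMod p)))
    (fun x _ => Finset.mem_univ _)
  simp only [Rc]
  rw [← h1, sN, Finset.card_product, Finset.card_univ, Int.card_Icc]
  congr 1
  omega

lemma sum_R_sq : ∑ μ : ZMod p, (Rc H L N μ) ^ 2 = J p L N H := by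
  set t := ((sN H L N) ×ˢ (sN H L N)).filter
    (fun r : (ℤ × H) × (ℤ × H) => phi H r.1 = phi H r.2) with ht
  have hJ : J p L N H = t.card := by
    rw [J]
    have e : {q : (ℤ × ℤ) × H × H //
        q.1.1 ∈ Finset.Icc (L + 1) (L + N) ∧ q.1.2 ∈ Finset.Icc (L + 1) (L + N) ∧
          (q.1.1 : ZMod p) * ((q.2.1 : (ZMod p)ˣ) : ZMod p)
            = (q.1.2 : ZMod p) * ((q.2.2 : (ZMod p)ˣ) : ZMod p)}
        ≃ {r : (ℤ × H) × (ℤ × H) // r ∈ t} := by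
      refine ⟨fun q => ⟨((q.1.1.1, q.1.2.1), (q.1.1.2, q.1.2.2)), ?_⟩,
        fun r => ⟨((r.1.1.1, r.1.2.1), (r.1.1.2, r.1.2.2)), ?_⟩,
        fun q => rfl, fun r => rfl⟩
      · obtain ⟨ha1, ha2, heq⟩ := q.2
        rw [ht, Finset.mem_filter, Finset.mem_product]
        refine ⟨⟨?_, ?_⟩, heq⟩ <;>
          · rw [sN, Finset.mem_product]
            exact ⟨by assumption, Finset.mem_univ _⟩
      · have hr : r.1 ∈ ((sN H L N) ×ˢ (sN H L N)).filter
            (fun r : (ℤ × H) × (ℤ × H) => phi H r.1 = phi H r.2) := by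
          rw [← ht]; exact r.2
        rw [Finset.mem_filter, Finset.mem_product] at hr
        obtain ⟨⟨h1, h2⟩, heq⟩ := hr
        rw [sN, Finset.mem_product] at h1 h2
        exact ⟨h1.1, h2.1, heq⟩
    rw [Nat.card_congr e, Nat.card_eq_fintype_card, Fintype.card_coe]
  have h2 := Finset.card_eq_sum_card_fiberwise
    (f := fun r : (ℤ × H) × (ℤ × H) => phi H r.1) (s := t)
    (t := (Finset.univ : Finset (ZMod p))) (fun x _ => Finset.mem_univ _)
  rw [hJ, h2]
  refine Finset.sum_congr rfl fun μ _ => ?_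
  have hfib : t.filter (fun r => phi H r.1 = μ)
      = ((sN H L N).filter (fun q => phi H q = μ))
          ×ˢ ((sN H L N).filter (fun q => phi H q = μ)) := by
    ext r
    simp only [ht, Finset.mem_filter, Finset.mem_product]
    constructor
    · rintro ⟨⟨⟨hs1, hs2⟩, heq⟩, hμ⟩
      exact ⟨⟨hs1, hμ⟩, hs2, heq ▸ hμ⟩
    · rintro ⟨⟨hs1, hμ1⟩, hs2, hμ2⟩
      exact ⟨⟨⟨hs1, hs2⟩, hμ1.trans hμ2.symm⟩, hμ1⟩
  rw [hfib, Finset.card_product, Rc, sq]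

lemma sum_fiber (F : ZMod p → ℝ) :
    ∑ q ∈ sN H L N, F (phi H q) = ∑ μ : ZMod p, (Rc H L N μ : ℝ) * F μ := by
  rw [← Finset.sum_fiberwise_of_maps_to (g := phi H) (t := (Finset.univ : Finset (ZMod p)))
    (fun x _ => Finset.mem_univ _) (fun q => F (phi H q))]
  refine Finset.sum_congr rfl fun μ _ => ?_
  have h2 : ∑ q ∈ (sN H L N).filter (fun q => phi H q = μ), F (phi H q)
      = ∑ q ∈ (sN H L N).filter (fun q => phi H q = μ), F μ :=
    Finset.sum_congr rfl fun q hq => by rw [(Finset.mem_filter.1 hq).2]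
  rw [h2, Finset.sum_const, nsmul_eq_mul, Rc]

end main

theorem stmt_5 (p : ℕ) [Fact p.Prime] (H : Subgroup (ZMod p)ˣ) (a : (ZMod p)ˣ)
    (L : ℤ) (N : ℕ) (m : ℕ) (hm : 2 ≤ m) :
    (∑ n ∈ Finset.Icc (L + 1) (L + N),
        ‖∑ h : H, ep p ((a : ZMod p) * (n : ZMod p) * ((h : (ZMod p)ˣ) : ZMod p))‖) ^ (2 * m)
      ≤ (N : ℝ) ^ (2 * m - 2) / (Nat.card H : ℝ) ^ 2
          * (J p L N H : ℝ) * (p : ℝ) * (T p m H : ℝ) := by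
  set K : ℕ := Fintype.card H with hK
  have hKcard : (Nat.card H : ℝ) = (K : ℝ) := by rw [Nat.card_eq_fintype_card]
  set F : ZMod p → ℝ := fun μ => ‖g H a μ‖ with hF
  set S : ℝ := ∑ n ∈ Finset.Icc (L + 1) (L + N),
      ‖∑ h : H, ep p ((a : ZMod p) * (n : ZMod p) * ((h : (ZMod p)ˣ) : ZMod p))‖
    with hS
  have key1 : (K : ℝ) * S = ∑ μ : ZMod p, (Rc H L N μ : ℝ) * F μ := by
    rw [← sum_fiber]
    rw [sN, Finset.sum_product, hS, Finset.mul_sum]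
    refine Finset.sum_congr rfl fun n _ => ?_
    have hinv : ∀ h : H, F (phi H (n, h)) = F ((n : ZMod p)) := fun h => by
      rw [hF]
      simp only
      rw [phi]
      rw [g_invariant]
    rw [Finset.sum_congr rfl (fun h _ => hinv h), Finset.sum_const, Finset.card_univ,
      nsmul_eq_mul]
    rfl
  have hRnn : ∀ μ ∈ (Finset.univ : Finset (ZMod p)), (0:ℝ) ≤ (Rc H L N μ : ℝ) :=
    fun μ _ => Nat.cast_nonneg _
  have hFnn : ∀ μ ∈ (Finset.univ : Finset (ZMod p)), (0:ℝ) ≤ F μ :=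
    fun μ _ => norm_nonneg _
  have key2 := hoelder_step Finset.univ (fun μ => (Rc H L N μ : ℝ)) F hRnn hFnn m hm
  rw [← key1] at key2
  have e1 : ∑ μ : ZMod p, (Rc H L N μ : ℝ) = ((N : ℝ) * (K : ℝ)) := by
    rw [← Nat.cast_sum]
    rw [sum_R]
    push_cast
    ring
  have e2 : ∑ μ : ZMod p, ((Rc H L N μ : ℝ)) ^ 2 = (J p L N H : ℝ) := by
    have : ∑ μ : ZMod p, ((Rc H L N μ : ℝ)) ^ 2
        = ((∑ μ : ZMod p, (Rc H L N μ) ^ 2 : ℕ) : ℝ) := by push_cast; ring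
    rw [this, sum_R_sq]
  have e3 : ∑ μ : ZMod p, F μ ^ (2 * m) = (p : ℝ) * (T p m H : ℝ) := moment_real H a m
  rw [e1, e2, e3] at key2
  -- key2 : ((K:ℝ) * S) ^ (2*m) ≤ ((N:ℝ)*(K:ℝ))^(2*m-2) * J * (p * T)
  have hKpos : (0:ℝ) < (K : ℝ) := by
    have : 0 < K := Fintype.card_pos
    exact_mod_cast this
  have hKpow : (0:ℝ) < (K : ℝ) ^ (2 * m) := pow_pos hKpos _
  rw [hKcard]
  rw [mul_pow, mul_pow] at key2
  have hsplit : ((K : ℝ)) ^ (2 * m) = (K : ℝ) ^ (2 * m - 2) * (K : ℝ) ^ 2 := by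
    rw [← pow_add]
    congr 1
    omega
  have goal' : (K : ℝ) ^ (2 * m) * (S ^ (2 * m))
      ≤ (K : ℝ) ^ (2 * m) * ((N : ℝ) ^ (2 * m - 2) / (K : ℝ) ^ 2
          * (J p L N H : ℝ) * (p : ℝ) * (T p m H : ℝ)) := by
    calc (K : ℝ) ^ (2 * m) * (S ^ (2 * m))
        ≤ (N : ℝ) ^ (2 * m - 2) * (K : ℝ) ^ (2 * m - 2)
            * (J p L N H : ℝ) * ((p : ℝ) * (T p m H : ℝ)) := by
          calc (K : ℝ) ^ (2 * m) * (S ^ (2 * m))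
              ≤ (N:ℝ) ^ (2*m-2) * (K:ℝ) ^ (2*m-2) * (J p L N H : ℝ)
                * ((p:ℝ) * (T p m H : ℝ)) := key2
            _ = _ := by ring
      _ = (K : ℝ) ^ (2 * m) * ((N : ℝ) ^ (2 * m - 2) / (K : ℝ) ^ 2
          * (J p L N H : ℝ) * (p : ℝ) * (T p m H : ℝ)) := by
          rw [hsplit]
          field_simp
  exact le_of_mul_le_mul_left goal' hKpow
end
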